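/- For g ≥ 2, if the full symmetry group Sym(B_g) ≅ (Z/2Z)^g ⋊ S_g acts by orthogonal maps on R^{n+1} preserving an embedded copy of the bouquet B_g of g circles in S^n and inducing the standard action on B_g (where (Z/2Z)^g reverses individual circles and S_g permutes them), then n ≥ 2g − 1. -/

import Mathlib

open RealInnerProductSpace

/-- **Main lower bound.** Let `g ≥ 2` and suppose the symmetry group
`Sym(B_g) = (ℤ/2ℤ)^g ⋊ S_g` of the bouquet of `g` circles acts by orthogonal maps on
`ℝ^{n+1}` preserving an embedded copy `B_g = ⋃ᵢ C i ⊂ S^n` (circles `C i` pairwise meeting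
exactly at the vertex `v`) and inducing the standard action: `ρ i` reverses the circle
`C i` (it preserves `C i`, is not the identity on `C i`, and has exactly one fixed point
on `C i \ {v}`), is the identity on each `C j` for `j ≠ i`, and `τ σ` permutes the
circles, with `τ` a homomorphism, the `ρ i` commuting involutions, and
`τ σ (ρ i) (τ σ)⁻¹ = ρ (σ i)`.  Then `n ≥ 2g - 1`. -/
theorem bouquet_equivariant_embedding_dim_bound
    (n g : ℕ) (hg : 2 ≤ g)
    (C : Fin g → Set (EuclideanSpace ℝ (Fin (n + 1))))
    (v : EuclideanSpace ℝ (Fin (n + 1)))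
    (hsphere : ∀ i, C i ⊆ Metric.sphere (0 : EuclideanSpace ℝ (Fin (n + 1))) 1)
    (hcircle : ∀ i, Nonempty (C i ≃ₜ Circle))
    (hv : ∀ i, v ∈ C i)
    (hinter : ∀ i j, i ≠ j → C i ∩ C j = {v})
    (ρ : Fin g → (EuclideanSpace ℝ (Fin (n + 1)) ≃ₗᵢ[ℝ] EuclideanSpace ℝ (Fin (n + 1))))
    (τ : Equiv.Perm (Fin g) →
      (EuclideanSpace ℝ (Fin (n + 1)) ≃ₗᵢ[ℝ] EuclideanSpace ℝ (Fin (n + 1))))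
    (hτmul : ∀ σ₁ σ₂, τ (σ₁ * σ₂) = τ σ₁ * τ σ₂)
    (hρ2 : ∀ i, ρ i * ρ i = 1)
    (hρcomm : ∀ i j, ρ i * ρ j = ρ j * ρ i)
    (hconj : ∀ (σ : Equiv.Perm (Fin g)) (i : Fin g), τ σ * ρ i * (τ σ)⁻¹ = ρ (σ i))
    (hρC : ∀ i, (ρ i) '' C i = C i)
    (hρfix : ∀ i j, j ≠ i → ∀ x ∈ C j, ρ i x = x)
    (hρnontriv : ∀ i, ∃ x ∈ C i, ρ i x ≠ x)
    (hρfixpt : ∀ i, ∃! p, p ∈ C i ∧ p ≠ v ∧ ρ i p = p)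
    (hτC : ∀ (σ : Equiv.Perm (Fin g)) (i : Fin g), (τ σ) '' C i = C (σ i)) :
    2 * g - 1 ≤ n := by
  classical
  -- norms on the sphere
  have hnorm : ∀ x ∈ Metric.sphere (0 : EuclideanSpace ℝ (Fin (n + 1))) 1, ‖x‖ = 1 := by
    intro x hx; simpa using hx
  -- two distinct indices
  have h0g : (0 : ℕ) < g := by omega
  have h1g : (1 : ℕ) < g := by omega
  set i0 : Fin g := ⟨0, h0g⟩ with hi0
  set i1 : Fin g := ⟨1, h1g⟩ with hi1
  have hi01 : i0 ≠ i1 := by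
    intro h; exact absurd (congrArg Fin.val h) (by simp [hi0, hi1])
  -- `ρ i` is an involution
  have hρinv : ∀ i x, ρ i (ρ i x) = x := by
    intro i x
    have := congrArg (fun f : EuclideanSpace ℝ (Fin (n + 1)) ≃ₗᵢ[ℝ] EuclideanSpace ℝ (Fin (n + 1)) => f x) (hρ2 i)
    exact this
  -- `ρ i` is symmetric
  have hsym : ∀ i (x y : EuclideanSpace ℝ (Fin (n + 1))), ⟪ρ i x, y⟫ = ⟪x, ρ i y⟫ := by
    intro i x y
    calc ⟪ρ i x, y⟫ = ⟪ρ i x, ρ i (ρ i y)⟫ := by rw [hρinv]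
    _ = ⟪x, ρ i y⟫ := (ρ i).inner_map_map x (ρ i y)
  -- `ρ i` fixes `v`
  have hρv : ∀ i, ρ i v = v := by
    intro i
    rcases eq_or_ne i i0 with h | h
    · exact hρfix i i1 (by rw [h]; exact hi01.symm) v (hv i1)
    · exact hρfix i i0 (Ne.symm h) v (hv i0)
  -- the fixed points `p i`
  choose p hp hup using hρfixpt
  have hpC : ∀ i, p i ∈ C i := fun i => (hp i).1
  have hpv : ∀ i, p i ≠ v := fun i => (hp i).2.1
  have hpfix : ∀ i, ρ i (p i) = p i := fun i => (hp i).2.2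
  -- `ρ k` fixes every `p j`
  have hfix_p : ∀ k j, ρ k (p j) = p j := by
    intro k j
    rcases eq_or_ne j k with h | h
    · rw [h]; exact hpfix k
    · exact hρfix k j h _ (hpC j)
  -- the moved points and the odd vectors `w i`
  choose x hx hxx using hρnontriv
  set w : Fin g → EuclideanSpace ℝ (Fin (n + 1)) := fun i => x i - ρ i (x i) with hw
  have hwne : ∀ i, w i ≠ 0 := by
    intro i h
    exact hxx i (sub_eq_zero.mp h).symm
  -- `w k` is orthogonal to every `ρ k`-fixed vector
  have L1 : ∀ k (u : EuclideanSpace ℝ (Fin (n + 1))), ρ k u = u → ⟪w k, u⟫ = 0 := by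
    intro k u hu
    have : ⟪ρ k (x k), u⟫ = ⟪x k, u⟫ := by
      rw [hsym, hu]
    rw [hw]; simp only [inner_sub_left, this, sub_self]
  -- `ρ k` fixes `w j` for `j ≠ k`
  have hfix_w : ∀ k j, j ≠ k → ρ k (w j) = w j := by
    intro k j hjk
    have h1 : ρ k (x j) = x j := hρfix k j hjk _ (hx j)
    have hmem : ρ j (x j) ∈ C j := by
      rw [← hρC j]; exact ⟨x j, hx j, rfl⟩
    have h2 : ρ k (ρ j (x j)) = ρ j (x j) := hρfix k j hjk _ hmem
    rw [hw]; simp only [map_sub, h1, h2]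
  -- orthogonality relations for the `w`'s
  have hww : ∀ k j, j ≠ k → ⟪w k, w j⟫ = 0 := fun k j h => L1 k (w j) (hfix_w k j h)
  have hwv : ∀ k, ⟪w k, v⟫ = 0 := fun k => L1 k v (hρv k)
  have hwp : ∀ k j, ⟪w k, p j⟫ = 0 := fun k j => L1 k (p j) (hfix_p k j)
  -- `τ σ` fixes `v`
  have hτv : ∀ σ, τ σ v = v := by
    intro σ
    have h0 : τ σ v ∈ C (σ i0) := by rw [← hτC σ i0]; exact ⟨v, hv i0, rfl⟩
    have h1 : τ σ v ∈ C (σ i1) := by rw [← hτC σ i1]; exact ⟨v, hv i1, rfl⟩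
    have hne : σ i0 ≠ σ i1 := fun h => hi01 (σ.injective h)
    have := hinter (σ i0) (σ i1) hne
    have hmem : τ σ v ∈ C (σ i0) ∩ C (σ i1) := ⟨h0, h1⟩
    rw [this] at hmem
    exact hmem
  -- `τ σ` sends `p i` to `p (σ i)`
  have hτp : ∀ σ i, τ σ (p i) = p (σ i) := by
    intro σ i
    apply hup (σ i)
    refine ⟨?_, ?_, ?_⟩
    · rw [← hτC σ i]; exact ⟨p i, hpC i, rfl⟩
    · intro h
      apply hpv i
      apply (τ σ).injective
      rw [h, hτv σ]
    · have hc := congrArg (fun f : EuclideanSpace ℝ (Fin (n + 1)) ≃ₗᵢ[ℝ] EuclideanSpace ℝ (Fin (n + 1)) => f (τ σ (p i))) (hconj σ i)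
      rw [← hc]
      show τ σ (ρ i ((τ σ)⁻¹ (τ σ (p i)))) = τ σ (p i)
      have : (τ σ)⁻¹ (τ σ (p i)) = p i := (τ σ).symm_apply_apply (p i)
      rw [this, hpfix i]
  -- norms
  have hvn : ‖v‖ = 1 := hnorm v (hsphere i0 (hv i0))
  have hpn : ∀ i, ‖p i‖ = 1 := fun i => hnorm (p i) (hsphere i (hpC i))
  -- the `p i` are pairwise distinct
  have hpd : ∀ i j, i ≠ j → p i ≠ p j := by
    intro i j hij h
    have : p i ∈ C i ∩ C j := ⟨hpC i, h ▸ hpC j⟩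
    rw [hinter i j hij] at this
    exact hpv i this
  -- pair transitivity of permutations
  have htrans : ∀ i j k l : Fin g, i ≠ j → k ≠ l →
      ∃ σ : Equiv.Perm (Fin g), σ i = k ∧ σ j = l := by
    intro i j k l hij hkl
    have hj'k : Equiv.swap i k j ≠ k :=
      fun hh => hij (Equiv.injective (Equiv.swap i k)
        (hh.trans (Equiv.swap_apply_left i k).symm)).symm
    refine ⟨Equiv.swap (Equiv.swap i k j) l * Equiv.swap i k, ?_, ?_⟩
    · show Equiv.swap (Equiv.swap i k j) l (Equiv.swap i k i) = k
      rw [Equiv.swap_apply_left i k]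
      exact Equiv.swap_apply_of_ne_of_ne (Ne.symm hj'k) hkl
    · show Equiv.swap (Equiv.swap i k j) l (Equiv.swap i k j) = l
      exact Equiv.swap_apply_left _ _
  -- constant inner products
  set c : ℝ := ⟪p i0, p i1⟫ with hcdef
  set a : ℝ := ⟪v, p i0⟫ with hadef
  have hpc : ∀ i j, i ≠ j → ⟪p i, p j⟫ = c := by
    intro i j hij
    obtain ⟨σ, h1, h2⟩ := htrans i0 i1 i j hi01 hij
    rw [hcdef, ← (τ σ).inner_map_map (p i0) (p i1), hτp σ i0, hτp σ i1, h1, h2]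
  have hpa : ∀ i, ⟪v, p i⟫ = a := by
    intro i
    have h1 : Equiv.swap i0 i i0 = i := Equiv.swap_apply_left i0 i
    rw [hadef, ← (τ (Equiv.swap i0 i)).inner_map_map v (p i0), hτv, hτp, h1]
  have hc1 : c ≠ 1 := by
    intro h
    exact hpd i0 i1 hi01 ((inner_eq_one_iff_of_norm_eq_one (hpn i0) (hpn i1)).mp h)
  -- the distinguished index and difference vectors
  set G : Fin g := ⟨g - 1, by omega⟩ with hG
  set d : Fin g → EuclideanSpace ℝ (Fin (n + 1)) := fun j => p j - p G with hd
  have hdG : d G = 0 := sub_self _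
  -- inner products of the `d`'s
  have hdd : ∀ j k, j ≠ G → k ≠ G → ⟪d j, d k⟫ =
      (1 - c) + (if j = k then (1 - c) else 0) := by
    intro j k hjG hkG
    rcases eq_or_ne j k with h | h
    · subst h
      have : ⟪p j, p G⟫ = c := hpc j G hjG
      have hGj : ⟪p G, p j⟫ = c := hpc G j (Ne.symm hjG)
      simp only [hd, inner_sub_left, inner_sub_right]
      rw [real_inner_self_eq_norm_mul_norm, real_inner_self_eq_norm_mul_norm,
        hpn j, hpn G, this, hGj]
      norm_num
      ring
    · have h1 : ⟪p j, p k⟫ = c := hpc j k h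
      have h2 : ⟪p j, p G⟫ = c := hpc j G hjG
      have h3 : ⟪p G, p k⟫ = c := hpc G k (Ne.symm hkG)
      simp only [hd, inner_sub_left, inner_sub_right, if_neg h]
      rw [real_inner_self_eq_norm_mul_norm, hpn G, h1, h2, h3]
      ring
  have hdv : ∀ j, ⟪d j, v⟫ = 0 := by
    intro j
    simp only [hd, inner_sub_left]
    rw [real_inner_comm v (p j), real_inner_comm v (p G), hpa j, hpa G, sub_self]
  have hwd : ∀ k j, ⟪w k, d j⟫ = 0 := by
    intro k j
    simp only [hd, inner_sub_right, hwp, sub_self]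
  -- the linearly independent family
  set f : Fin g ⊕ Fin g → EuclideanSpace ℝ (Fin (n + 1)) :=
    Sum.elim w (fun j => if j = G then v else d j) with hf
  have li : LinearIndependent ℝ f := by
    rw [Fintype.linearIndependent_iff]
    intro co hsum
    -- inner products with the sum vanish
    have key : ∀ u : EuclideanSpace ℝ (Fin (n + 1)), ∑ i, co i * ⟪f i, u⟫ = 0 := by
      intro u
      have h := congrArg (fun z : EuclideanSpace ℝ (Fin (n + 1)) => ⟪z, u⟫) hsum
      simp only [inner_zero_left] at h
      rw [← h, sum_inner]
      simp only [real_inner_smul_left]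
    -- inner products of the second block with w k vanish
    have hfw : ∀ j k, ⟪f (Sum.inr j), w k⟫ = 0 := by
      intro j k
      simp only [hf, Sum.elim_inr]
      rcases eq_or_ne j G with h | h
      · rw [if_pos h, real_inner_comm]; exact hwv k
      · rw [if_neg h, real_inner_comm]; exact hwd k (j)
    -- Step A : coefficients of the w's vanish
    have stepA : ∀ k, co (Sum.inl k) = 0 := by
      intro k
      have hk := key (w k)
      rw [Fintype.sum_sum_type] at hk
      have h2 : ∑ j, co (Sum.inr j) * ⟪f (Sum.inr j), w k⟫ = 0 := by
        apply Finset.sum_eq_zero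
        intro j _
        rw [hfw j k, mul_zero]
      have h1 : ∑ j, co (Sum.inl j) * ⟪f (Sum.inl j), w k⟫
          = co (Sum.inl k) * ⟪w k, w k⟫ := by
        rw [Finset.sum_eq_single k]
        · simp only [hf, Sum.elim_inl]
        · intro j _ hj
          have hwjk : ⟪w j, w k⟫ = 0 := by
            rw [real_inner_comm]; exact hww k j hj
          simp only [hf, Sum.elim_inl, hwjk, mul_zero]
        · intro h; exact absurd (Finset.mem_univ k) h
      rw [h1, h2, add_zero] at hk
      have hwk : ⟪w k, w k⟫ ≠ 0 := fun h => hwne k (inner_self_eq_zero.mp h)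
      exact (mul_eq_zero.mp hk).resolve_right hwk
    -- Step B : the coefficient of v vanishes
    have stepB : co (Sum.inr G) = 0 := by
      have hk := key v
      rw [Fintype.sum_sum_type] at hk
      have h1 : ∑ j, co (Sum.inl j) * ⟪f (Sum.inl j), v⟫ = 0 := by
        apply Finset.sum_eq_zero
        intro j _
        simp only [hf, Sum.elim_inl, hwv j, mul_zero]
      have h2 : ∑ j, co (Sum.inr j) * ⟪f (Sum.inr j), v⟫ = co (Sum.inr G) := by
        rw [Finset.sum_eq_single G]
        · show co (Sum.inr G) * ⟪(if G = G then v else d G), v⟫ = co (Sum.inr G)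
          rw [if_pos rfl, real_inner_self_eq_norm_mul_norm, hvn]
          ring
        · intro j _ hj
          simp only [hf, Sum.elim_inr, if_neg hj, hdv j, mul_zero]
        · intro h; exact absurd (Finset.mem_univ G) h
      rw [h1, h2, zero_add] at hk
      exact hk
    -- Step C : the coefficients of the d's vanish
    set S : ℝ := ∑ j, co (Sum.inr j) with hS
    have stepC : ∀ k, k ≠ G → co (Sum.inr k) = -S := by
      intro k hkG
      have hk := key (d k)
      rw [Fintype.sum_sum_type] at hk
      have h1 : ∑ j, co (Sum.inl j) * ⟪f (Sum.inl j), d k⟫ = 0 := by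
        apply Finset.sum_eq_zero
        intro j _
        simp only [hf, Sum.elim_inl, hwd j k, mul_zero]
      have h2 : ∑ j, co (Sum.inr j) * ⟪f (Sum.inr j), d k⟫
          = ∑ j, (co (Sum.inr j) * (1 - c) + (if j = k then co (Sum.inr j) * (1 - c) else 0)) := by
        apply Finset.sum_congr rfl
        intro j _
        rcases eq_or_ne j G with h | h
        · subst h
          rw [stepB, if_neg (Ne.symm hkG)]
          ring
        · simp only [hf, Sum.elim_inr, if_neg h]
          rw [hdd j k h hkG]
          rcases eq_or_ne j k with hjk | hjk
          · rw [if_pos hjk, if_pos hjk]; ring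
          · rw [if_neg hjk, if_neg hjk]; ring
      have h3 : ∑ j, (co (Sum.inr j) * (1 - c) + (if j = k then co (Sum.inr j) * (1 - c) else 0))
          = S * (1 - c) + co (Sum.inr k) * (1 - c) := by
        rw [Finset.sum_add_distrib, ← Finset.sum_mul, ← hS,
          Finset.sum_ite_eq' Finset.univ k (fun j => co (Sum.inr j) * (1 - c))]
        simp
      rw [h1, h2, h3, zero_add] at hk
      have hne : (1 : ℝ) - c ≠ 0 := fun h => hc1 (by linarith)
      have hz : (S + co (Sum.inr k)) * (1 - c) = 0 := by ring_nf; ring_nf at hk; linarith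
      have := (mul_eq_zero.mp hz).resolve_right hne
      linarith
    have hS0 : S = 0 := by
      have h4 : S = ∑ j : Fin g, ((-S) + (if j = G then S else 0)) := by
        rw [hS]
        apply Finset.sum_congr rfl
        intro j _
        rcases eq_or_ne j G with h | h
        · subst h; rw [if_pos rfl, stepB]; ring
        · rw [if_neg h, stepC j h]; ring
      rw [Finset.sum_add_distrib, Finset.sum_const, Finset.card_univ,
        Fintype.card_fin, Finset.sum_ite_eq' Finset.univ G (fun _ => S)] at h4
      simp only [Finset.mem_univ, if_true, nsmul_eq_mul, mul_neg] at h4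
      have hgS : (g : ℝ) * S = 0 := by linarith
      have hgne : (g : ℝ) ≠ 0 := Nat.cast_ne_zero.mpr (by omega)
      exact (mul_eq_zero.mp hgS).resolve_left hgne
    -- finish independence
    intro i
    rcases i with k | k
    · exact stepA k
    · rcases eq_or_ne k G with h | h
      · subst h; exact stepB
      · rw [stepC k h, hS0, neg_zero]
  -- conclude the dimension bound
  have hcard := li.fintype_card_le_finrank
  rw [Fintype.card_sum, Fintype.card_fin] at hcard
  have hfr : Module.finrank ℝ (EuclideanSpace ℝ (Fin (n + 1))) = n + 1 := finrank_euclideanSpace_fin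
  rw [hfr] at hcard
  omega
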